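/- Let D be a digraph and ED the extension of D obtained by blowing up each vertex v_i into an independent set of odd size s_i. Then χ'_wo(ED) = χ'_wo(D). -/

import Mathlib

open Finset
open scoped Classical

namespace WeakOdd

variable {V : Type*} [Fintype V] [DecidableEq V]

/-- The out semi-cut of `v`: arcs leaving `v`. -/
def outCut (A : Finset (V × V)) (v : V) : Finset (V × V) :=
  A.filter fun e => e.1 = v

/-- The in semi-cut of `v`: arcs entering `v`. -/
def inCut (A : Finset (V × V)) (v : V) : Finset (V × V) :=
  A.filter fun e => e.2 = v

/-- The weak-odd condition holds at `v` for the arc coloring `φ`. -/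
def SatAt (A : Finset (V × V)) (φ : V × V → ℕ) (v : V) : Prop :=
  ((outCut A v).Nonempty → ∃ i, Odd ((outCut A v).filter fun e => φ e = i).card) ∧
  ((inCut A v).Nonempty → ∃ i, Odd ((inCut A v).filter fun e => φ e = i).card)

/-- `φ` is a weak-odd `k`-edge coloring of the digraph with arc set `A`. -/
def IsWOColoring (A : Finset (V × V)) (k : ℕ) (φ : V × V → ℕ) : Prop :=
  (∀ e ∈ A, φ e < k) ∧ ∀ v, SatAt A φ v

/-- The weak-odd chromatic index. -/
noncomputable def woIndex (A : Finset (V × V)) : ℕ :=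
  sInf {k | ∃ φ : V × V → ℕ, IsWOColoring A k φ}

/-- The defect: minimum number of failing vertices over all 2-arc-colorings. -/
noncomputable def defect (A : Finset (V × V)) : ℕ :=
  sInf {m | ∃ φ : V × V → ℕ, (∀ e ∈ A, φ e < 2) ∧
    (Finset.univ.filter fun v => ¬ SatAt A φ v).card = m}

def IsTournament (A : Finset (V × V)) : Prop :=
  (∀ v, (v, v) ∉ A) ∧ ∀ u v : V, u ≠ v → ((u, v) ∈ A ↔ (v, u) ∉ A)

def IsSemicomplete (A : Finset (V × V)) : Prop :=
  (∀ v, (v, v) ∉ A) ∧ ∀ u v : V, u ≠ v → (u, v) ∈ A ∨ (v, u) ∈ A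

/-- A vertex is peripheral if some semi-cut is empty. -/
def Peripheral (A : Finset (V × V)) (v : V) : Prop :=
  outCut A v = ∅ ∨ inCut A v = ∅

/-- The blow-up of a digraph: each vertex `w` is replaced by an independent set of
size `s w`, with all arcs between the sets oriented as in `A`. -/
def blowup {W : Type*} [Fintype W] [DecidableEq W] (A : Finset (W × W)) (s : W → ℕ) :
    Finset ((Σ w, Fin (s w)) × (Σ w, Fin (s w))) :=
  Finset.univ.filter fun e => (e.1.1, e.2.1) ∈ A

end WeakOdd

open WeakOdd

set_option linter.unusedSectionVars false
set_option linter.unusedVariables false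

namespace WOAux

/-! ### Parity helpers -/

lemma cast2_zero {n : ℕ} : ((n : ZMod 2) = 0) ↔ Even n := by
  constructor
  · intro h
    rcases Nat.even_or_odd n with he | ho
    · exact he
    · exfalso
      rw [Nat.odd_iff] at ho
      rw [← ZMod.natCast_mod, ho] at h
      simp at h
  · rintro ⟨r, rfl⟩
    push_cast
    have : ∀ y : ZMod 2, y + y = 0 := by decide
    exact this r

lemma cast2_one {n : ℕ} : ((n : ZMod 2) = 1) ↔ Odd n := by
  have h1 : ∀ x : ZMod 2, x = 1 ↔ ¬ x = 0 := by decide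
  rw [h1, ← Nat.not_even_iff_odd, not_iff_not, cast2_zero]

variable {V : Type*} [Fintype V] [DecidableEq V]

/-! ### Split-graph basics -/

/-- The semicut attached to a "split vertex". -/
def cutZ (A : Finset (V × V)) (z : V ⊕ V) : Finset (V × V) :=
  Sum.elim (outCut A) (inCut A) z

lemma mem_cutZ {A : Finset (V × V)} {e : V × V} {z : V ⊕ V} :
    e ∈ cutZ A z ↔ e ∈ A ∧ (z = Sum.inl e.1 ∨ z = Sum.inr e.2) := by
  cases z with
  | inl u => simp [cutZ, outCut, Finset.mem_filter, eq_comm]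
  | inr v => simp [cutZ, inCut, Finset.mem_filter, eq_comm]

/-- One step of adjacency in the split graph. -/
def RZ (A : Finset (V × V)) (z z' : V ⊕ V) : Prop :=
  ∃ e ∈ A, (z = Sum.inl e.1 ∧ z' = Sum.inr e.2) ∨ (z = Sum.inr e.2 ∧ z' = Sum.inl e.1)

/-- Reachability in the split graph. -/
def Reach (A : Finset (V × V)) : V ⊕ V → V ⊕ V → Prop :=
  Relation.ReflTransGen (RZ A)

lemma RZ.symm {A : Finset (V × V)} {z z' : V ⊕ V} (h : RZ A z z') : RZ A z' z := by
  obtain ⟨e, he, h | h⟩ := h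
  · exact ⟨e, he, Or.inr ⟨h.2, h.1⟩⟩
  · exact ⟨e, he, Or.inl ⟨h.2, h.1⟩⟩

lemma reach_refl {A : Finset (V × V)} (z : V ⊕ V) : Reach A z z := Relation.ReflTransGen.refl

lemma reach_symm {A : Finset (V × V)} {z z' : V ⊕ V} (h : Reach A z z') : Reach A z' z :=
  by
    induction h with
    | refl => exact reach_refl _
    | tail _ hr ih => exact Relation.ReflTransGen.trans (Relation.ReflTransGen.single (RZ.symm hr)) ih

lemma reach_trans {A : Finset (V × V)} {a b c : V ⊕ V} (h : Reach A a b) (h' : Reach A b c) :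
    Reach A a c := Relation.ReflTransGen.trans h h'

/-- The connected component of a split vertex, as a finset. -/
noncomputable def comp (A : Finset (V × V)) (z : V ⊕ V) : Finset (V ⊕ V) :=
  Finset.univ.filter (Reach A z)

lemma mem_comp {A : Finset (V × V)} {z w : V ⊕ V} : w ∈ comp A z ↔ Reach A z w := by
  simp [comp]

lemma comp_congr {A : Finset (V × V)} {z w : V ⊕ V} (h : Reach A z w) :
    comp A z = comp A w := by
  ext u
  simp only [mem_comp]
  exact ⟨fun hu => reach_trans (reach_symm h) hu, fun hu => reach_trans h hu⟩

lemma reach_of_mem_cut {A : Finset (V × V)} {e : V × V} {z : V ⊕ V} (h : e ∈ cutZ A z) :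
    Reach A z (Sum.inl e.1) ∧ Reach A z (Sum.inr e.2) := by
  rw [mem_cutZ] at h
  obtain ⟨he, hz | hz⟩ := h <;> subst hz
  · exact ⟨reach_refl _, Relation.ReflTransGen.single ⟨e, he, Or.inl ⟨rfl, rfl⟩⟩⟩
  · exact ⟨Relation.ReflTransGen.single ⟨e, he, Or.inr ⟨rfl, rfl⟩⟩, reach_refl _⟩

lemma cut_nonempty_of_reach {A : Finset (V × V)} {z z' : V ⊕ V} (h : Reach A z z')
    (hz : (cutZ A z).Nonempty) : (cutZ A z').Nonempty := by
  rcases Relation.ReflTransGen.cases_tail h with rfl | ⟨c, _, hr⟩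
  · exact hz
  · obtain ⟨e, he, hc | hc⟩ := hr
    · exact ⟨e, mem_cutZ.2 ⟨he, Or.inr hc.2⟩⟩
    · exact ⟨e, mem_cutZ.2 ⟨he, Or.inl hc.2⟩⟩


/-! ### Walk vectors -/

lemma indicator_cut_eq {A : Finset (V × V)} {e : V × V} (he : e ∈ A) (w : V ⊕ V) :
    (if e ∈ cutZ A w then (1 : ZMod 2) else 0) =
      (if w = Sum.inl e.1 then (1 : ZMod 2) else 0) +
      (if w = Sum.inr e.2 then (1 : ZMod 2) else 0) := by
  by_cases h1 : w = Sum.inl e.1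
  · subst h1
    simp [mem_cutZ, he]
  · by_cases h2 : w = Sum.inr e.2
    · subst h2
      simp [mem_cutZ, he]
    · have : e ∉ cutZ A w := by
        rw [mem_cutZ]
        tauto
      simp [this, h1, h2]

lemma exists_walkVec {A : Finset (V × V)} {z z' : V ⊕ V} (h : Reach A z z') :
    ∃ x : V × V → ZMod 2, (∀ e, x e ≠ 0 → e ∈ A) ∧
      ∀ w, (∑ e ∈ cutZ A w, x e) =
        (if w = z then (1 : ZMod 2) else 0) + (if w = z' then 1 else 0) := by
  induction h using Relation.ReflTransGen.head_induction_on with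
  | refl =>
    refine ⟨fun _ => 0, by simp, fun w => ?_⟩
    have : ∀ t : ZMod 2, (0 : ZMod 2) = t + t := by decide
    simpa using this _
  | head hr _ ih =>
    rename_i a c _
    obtain ⟨x, hx, hsum⟩ := ih
    obtain ⟨e, he, hcase⟩ := hr
    refine ⟨fun e' => x e' + (if e' = e then 1 else 0), ?_, fun w => ?_⟩
    · intro e' h'
      by_cases h1 : e' = e
      · subst h1; exact he
      · simp only [h1, if_false, add_zero] at h'
        exact hx e' h'
    · rw [Finset.sum_add_distrib, hsum w, Finset.sum_ite_eq' (cutZ A w) e (fun _ => (1 : ZMod 2)),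
        indicator_cut_eq he w]
      rcases hcase with ⟨ha, hc⟩ | ⟨ha, hc⟩
      · subst ha; subst hc
        exact (by decide : ∀ p q r : ZMod 2, (q + r) + (p + q) = p + r) _ _ _
      · subst ha; subst hc
        exact (by decide : ∀ p q r : ZMod 2, (p + r) + (p + q) = q + r) _ _ _


/-! ### The parity solver -/

lemma solve (A : Finset (V × V)) (S₀ : Finset (V ⊕ V)) :
    ∀ S : Finset (V ⊕ V), S ⊆ S₀ →
    (∀ z ∈ S, (∃ z', z' ∉ S₀ ∧ Reach A z z') ∨
        Even ((comp A z).filter (· ∈ S)).card) →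
    ∃ x : V × V → ZMod 2, (∀ e, x e ≠ 0 → e ∈ A) ∧
      ∀ z ∈ S₀, (∑ e ∈ cutZ A z, x e) = (if z ∈ S then (1 : ZMod 2) else 0) := by
  intro S
  induction S using Finset.strongInductionOn with
  | _ S ih =>
  intro hSsub hgood
  rcases S.eq_empty_or_nonempty with rfl | ⟨z, hz⟩
  · exact ⟨fun _ => 0, by simp, fun w _ => by simp⟩
  by_cases hpar : ∃ z' ∈ S, z' ≠ z ∧ Reach A z z'
  · obtain ⟨z', hz'S, hne, hreach⟩ := hpar
    set S' := (S.erase z).erase z' with hS'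
    have hss : S' ⊂ S := by
      refine Finset.ssubset_iff_of_subset ((Finset.erase_subset _ _).trans (Finset.erase_subset _ _)) |>.2 ⟨z, hz, ?_⟩
      simp [hS']
    have hgood' : ∀ w ∈ S', (∃ u, u ∉ S₀ ∧ Reach A w u) ∨
        Even ((comp A w).filter (· ∈ S')).card := by
      intro w hw
      have hwS : w ∈ S := Finset.mem_of_mem_erase (Finset.mem_of_mem_erase hw)
      rcases hgood w hwS with hdump | heven
      · exact Or.inl hdump
      · right
        by_cases hwz : Reach A w z
        · have hzc : z ∈ (comp A w).filter (· ∈ S) := by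
            simp [mem_comp, hwz, hz]
          have hz'c : z' ∈ (comp A w).filter (· ∈ S) := by
            simp [mem_comp, reach_trans hwz hreach, hz'S]
          have hfe : (comp A w).filter (· ∈ S') = ((comp A w).filter (· ∈ S)) \ {z, z'} := by
            ext u
            simp only [Finset.mem_filter, Finset.mem_sdiff, Finset.mem_insert,
              Finset.mem_singleton, hS', Finset.mem_erase]
            tauto
          have hsub2 : ({z, z'} : Finset (V ⊕ V)) ⊆ (comp A w).filter (· ∈ S) := by
            intro u hu
            rcases Finset.mem_insert.1 hu with rfl | hu
            · exact hzc
            · rw [Finset.mem_singleton] at hu; subst hu; exact hz'c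
          have hcard2 : ({z, z'} : Finset (V ⊕ V)).card = 2 := by
            rw [Finset.card_insert_of_notMem (by simpa using hne.symm.symm ∘ Eq.symm), Finset.card_singleton]
          have hle : 2 ≤ ((comp A w).filter (· ∈ S)).card := by
            calc 2 = ({z, z'} : Finset (V ⊕ V)).card := hcard2.symm
            _ ≤ _ := Finset.card_le_card hsub2
          rw [hfe, Finset.card_sdiff_of_subset hsub2, hcard2, Nat.even_sub hle]
          simpa using heven
        · have : (comp A w).filter (· ∈ S') = (comp A w).filter (· ∈ S) := by
            ext u
            simp only [Finset.mem_filter, hS', Finset.mem_erase]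
            constructor
            · tauto
            · rintro ⟨hu, huS⟩
              refine ⟨hu, ?_, ?_, huS⟩
              · rintro rfl
                exact hwz (reach_trans (mem_comp.1 hu) (reach_symm hreach))
              · rintro rfl
                exact hwz (mem_comp.1 hu)
          rw [this]; exact heven
    obtain ⟨x, hx, hsum⟩ := ih S' hss (hss.subset.trans hSsub) hgood'
    obtain ⟨y, hy, hwsum⟩ := exists_walkVec hreach
    refine ⟨fun e => x e + y e, ?_, fun w hw => ?_⟩
    · intro e h
      by_cases h1 : x e = 0
      · exact hy e (by simpa [h1] using h)
      · exact hx e h1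
    · rw [Finset.sum_add_distrib, hsum w hw, hwsum w]
      have hne' : z ≠ z' := fun h => hne h.symm
      by_cases h1 : w = z
      · subst h1
        simp [hS', hz, hne', Finset.mem_erase]
      · by_cases h2 : w = z'
        · subst h2
          simp [hS', hz'S, h1, hne, Finset.mem_erase]
        · simp [hS', h1, h2, Finset.mem_erase]
  · -- isolated in S: must dump
    have hfilter : (comp A z).filter (· ∈ S) = {z} := by
      ext u
      simp only [Finset.mem_filter, Finset.mem_singleton, mem_comp]
      constructor
      · rintro ⟨hr, hu⟩
        by_contra hne
        exact hpar ⟨u, hu, hne, hr⟩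
      · rintro rfl
        exact ⟨reach_refl _, hz⟩
    rcases hgood z hz with ⟨z', hz'n, hreach⟩ | heven
    · have hss : S.erase z ⊂ S := Finset.erase_ssubset hz
      have hgood' : ∀ w ∈ S.erase z, (∃ u, u ∉ S₀ ∧ Reach A w u) ∨
          Even ((comp A w).filter (· ∈ S.erase z)).card := by
        intro w hw
        obtain ⟨hwne, hwS⟩ := Finset.mem_erase.1 hw
        rcases hgood w hwS with hdump | heven
        · exact Or.inl hdump
        · right
          have : (comp A w).filter (· ∈ S.erase z) = (comp A w).filter (· ∈ S) := by
            ext u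
            simp only [Finset.mem_filter, Finset.mem_erase]
            constructor
            · tauto
            · rintro ⟨hu, huS⟩
              refine ⟨hu, ?_, huS⟩
              rintro rfl
              exact hpar ⟨w, hwS, hwne, reach_symm (mem_comp.1 hu)⟩
          rw [this]; exact heven
      obtain ⟨x, hx, hsum⟩ := ih _ hss (hss.subset.trans hSsub) hgood'
      obtain ⟨y, hy, hwsum⟩ := exists_walkVec hreach
      refine ⟨fun e => x e + y e, ?_, fun w hw => ?_⟩
      · intro e h
        by_cases h1 : x e = 0
        · exact hy e (by simpa [h1] using h)
        · exact hx e h1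
      · rw [Finset.sum_add_distrib, hsum w hw, hwsum w]
        have hwz' : w ≠ z' := fun h => hz'n (h ▸ hw)
        by_cases h1 : w = z
        · subst h1
          simp [hwz', hz, Finset.mem_erase]
        · simp [h1, hwz', Finset.mem_erase]
    · rw [hfilter] at heven
      simp at heven
  

/-! ### Colorings via split vertices -/

def CondZ (A : Finset (V × V)) (φ : V × V → ℕ) (z : V ⊕ V) : Prop :=
  (cutZ A z).Nonempty → ∃ i, Odd ((cutZ A z).filter fun e => φ e = i).card

lemma isWO_iff {A : Finset (V × V)} {k : ℕ} {φ : V × V → ℕ} :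
    IsWOColoring A k φ ↔ (∀ e ∈ A, φ e < k) ∧ ∀ z, CondZ A φ z := by
  constructor
  · rintro ⟨hb, hs⟩
    refine ⟨hb, fun z => ?_⟩
    cases z with
    | inl v => exact (hs v).1
    | inr v => exact (hs v).2
  · rintro ⟨hb, hs⟩
    exact ⟨hb, fun v => ⟨hs (Sum.inl v), hs (Sum.inr v)⟩⟩

/-- predicate: the vertex is constrained (nonempty cut of even size) -/
def Tpred (A : Finset (V × V)) (z : V ⊕ V) : Prop :=
  (cutZ A z).Nonempty ∧ Even (cutZ A z).card

def Pcond (A : Finset (V × V)) : Prop :=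
  ∀ z : V ⊕ V, (cutZ A z).Nonempty → Odd (cutZ A z).card

def Crit (A : Finset (V × V)) : Prop :=
  ∀ z : V ⊕ V, Tpred A z →
    (∃ z', Reach A z z' ∧ ¬ Tpred A z') ∨ Even (comp A z).card

/-- sum of an indicator-valued vector over a cut counts the 1-positions -/
lemma sum_cut_eq_card {A : Finset (V × V)} (x : V × V → ZMod 2) (z : V ⊕ V) :
    (∑ e ∈ cutZ A z, x e) = (((cutZ A z).filter fun e => x e = 1).card : ZMod 2) := by
  rw [Finset.sum_congr rfl (fun e _ => show x e = if x e = 1 then (1 : ZMod 2) else 0 by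
    by_cases h : x e = 1
    · simp [h]
    · have : x e = 0 := by revert h; generalize x e = t; revert t; decide
      simp [h, this])]
  rw [Finset.sum_boole]


/-- partition of a cut into two color classes -/
lemma two_class {c : Finset (V × V)} {φ : V × V → ℕ} (h : ∀ e ∈ c, φ e < 2) :
    c.card = (c.filter fun e => φ e = 0).card + (c.filter fun e => φ e = 1).card := by
  rw [← Finset.card_filter_add_card_filter_not (p := fun e => φ e = 0)]
  congr 2
  ext e
  simp only [Finset.mem_filter]
  constructor
  · rintro ⟨he, h0⟩; exact ⟨he, by have := h e he; omega⟩
  · rintro ⟨he, h1⟩; exact ⟨he, by omega⟩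

lemma three_class {c : Finset (V × V)} {φ : V × V → ℕ} (h : ∀ e ∈ c, φ e < 3) :
    c.card = (c.filter fun e => φ e = 0).card + (c.filter fun e => φ e = 1).card
      + (c.filter fun e => φ e = 2).card := by
  rw [← Finset.card_filter_add_card_filter_not (p := fun e => φ e = 0)]
  have huni : c.filter (fun e => ¬ φ e = 0)
      = c.filter (fun e => φ e = 1) ∪ c.filter (fun e => φ e = 2) := by
    ext e
    simp only [Finset.mem_filter, Finset.mem_union]
    constructor
    · rintro ⟨he, h0⟩
      have := h e he
      interval_cases h' : φ e <;> simp_all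
    · rintro (⟨he, h'⟩ | ⟨he, h'⟩) <;> simp_all
  have hdis : Disjoint (c.filter (fun e => φ e = 1)) (c.filter (fun e => φ e = 2)) := by
    apply Finset.disjoint_left.2
    intro e h1 h2
    simp only [Finset.mem_filter] at h1 h2
    omega
  rw [huni, Finset.card_union_of_disjoint hdis, add_assoc]


lemma cutZ_eq_filter {A : Finset (V × V)} (w : V ⊕ V) :
    cutZ A w = A.filter (fun e => w = Sum.inl e.1 ∨ w = Sum.inr e.2) := by
  ext e
  rw [mem_cutZ, Finset.mem_filter]

/-- Existence of a weak-odd 2-coloring from the component criterion. -/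
lemma exists_two_col {A : Finset (V × V)} (h : Crit A) :
    ∃ φ : V × V → ℕ, IsWOColoring A 2 φ := by
  classical
  set T : Finset (V ⊕ V) := Finset.univ.filter (Tpred A) with hT
  have hmemT : ∀ z, z ∈ T ↔ Tpred A z := by intro z; simp [hT]
  have hgood : ∀ z ∈ T, (∃ z', z' ∉ T ∧ Reach A z z') ∨
      Even ((comp A z).filter (· ∈ T)).card := by
    intro z hzT
    by_cases hfree : ∃ w, Reach A z w ∧ ¬ Tpred A w
    · obtain ⟨w, hr, hw⟩ := hfree
      exact Or.inl ⟨w, by simpa [hmemT] using hw, hr⟩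
    · right
      push_neg at hfree
      rcases h z ((hmemT z).1 hzT) with ⟨w, hr, hw⟩ | heven
      · exact absurd (hfree w hr) (by simpa using hw)
      · have : (comp A z).filter (· ∈ T) = comp A z := by
          apply Finset.filter_true_of_mem
          intro w hw
          exact (hmemT w).2 (hfree w (mem_comp.1 hw))
        rw [this]; exact heven
  obtain ⟨x, hxsupp, hxsum⟩ := solve A T T Finset.Subset.rfl hgood
  refine ⟨fun e => if x e = 1 then 1 else 0, isWO_iff.2 ⟨?_, ?_⟩⟩
  · intro e _; by_cases h' : x e = 1 <;> simp [h']
  · intro z hne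
    set φ : V × V → ℕ := fun e => if x e = 1 then 1 else 0 with hφ
    by_cases heven : Even (cutZ A z).card
    · refine ⟨1, ?_⟩
      have hzT : z ∈ T := (hmemT z).2 ⟨hne, heven⟩
      have h1 : (∑ e ∈ cutZ A z, x e) = 1 := by
        rw [hxsum z hzT, if_pos hzT]
      rw [sum_cut_eq_card] at h1
      have : (cutZ A z).filter (fun e => φ e = 1) = (cutZ A z).filter (fun e => x e = 1) := by
        apply Finset.filter_congr
        intro e _
        simp only [hφ]
        constructor
        · intro h'; by_contra hx; simp [hx] at h'
        · intro h'; simp [h']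
      rw [this]
      exact cast2_one.1 h1
    · have hbound : ∀ e ∈ cutZ A z, φ e < 2 := by
        intro e _; simp only [hφ]; split <;> omega
      have hcard := two_class hbound
      by_contra hno
      push_neg at hno
      have h0 := Nat.not_odd_iff_even.1 (hno 0)
      have h1 := Nat.not_odd_iff_even.1 (hno 1)
      exact heven (hcard ▸ Nat.even_add.2 (iff_of_true h0 h1))

/-- A weak-odd 2-coloring yields the component criterion. -/
lemma crit_of_two_col {A : Finset (V × V)} (h : ∃ φ : V × V → ℕ, IsWOColoring A 2 φ) :
    Crit A := by
  classical
  obtain ⟨φ, hφ⟩ := h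
  rw [isWO_iff] at hφ
  obtain ⟨hb, hc⟩ := hφ
  set x : V × V → ZMod 2 := fun e => if e ∈ A ∧ φ e = 1 then 1 else 0 with hx
  have hx1 : ∀ z, Tpred A z → (∑ e ∈ cutZ A z, x e) = 1 := by
    intro z hz
    obtain ⟨i, hi⟩ := hc z hz.1
    have hi2 : i < 2 := by
      by_contra hge
      have : (cutZ A z).filter (fun e => φ e = i) = ∅ := by
        apply Finset.filter_false_of_mem
        intro e he
        have := hb e (mem_cutZ.1 he).1
        omega
      rw [this] at hi
      simp at hi
    have hodd1 : Odd ((cutZ A z).filter (fun e => φ e = 1)).card := by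
      rcases (by omega : i = 0 ∨ i = 1) with rfl | rfl
      · have hcard := two_class (c := cutZ A z) (φ := φ) (fun e he => hb e (mem_cutZ.1 he).1)
        have heven := hz.2
        rw [hcard, Nat.even_add] at heven
        rw [Nat.odd_iff, ← Nat.not_even_iff] at hi ⊢
        tauto
      · exact hi
    rw [sum_cut_eq_card]
    apply cast2_one.2
    have : (cutZ A z).filter (fun e => x e = 1) = (cutZ A z).filter (fun e => φ e = 1) := by
      apply Finset.filter_congr
      intro e he
      have heA : e ∈ A := (mem_cutZ.1 he).1
      simp [hx, heA]
    rw [this]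
    exact hodd1
  intro z hz
  by_cases hfree : ∃ w, Reach A z w ∧ ¬ Tpred A w
  · exact Or.inl hfree
  · right
    push_neg at hfree
    -- double counting
    have hdouble : (∑ w ∈ comp A z, ∑ e ∈ cutZ A w, x e) = 0 := by
      have hexp : ∀ w, (∑ e ∈ cutZ A w, x e) =
          ∑ e ∈ A, ((if w = Sum.inl e.1 then x e else 0) + (if w = Sum.inr e.2 then x e else 0)) := by
        intro w
        rw [cutZ_eq_filter w, Finset.sum_filter]
        apply Finset.sum_congr rfl
        intro e _
        by_cases h1 : w = Sum.inl e.1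
        · subst h1; simp
        · by_cases h2 : w = Sum.inr e.2
          · subst h2; simp [h1]
          · simp [h1, h2]
      calc (∑ w ∈ comp A z, ∑ e ∈ cutZ A w, x e)
          = ∑ w ∈ comp A z, ∑ e ∈ A, ((if w = Sum.inl e.1 then x e else 0) + (if w = Sum.inr e.2 then x e else 0)) := by
            exact Finset.sum_congr rfl (fun w _ => hexp w)
        _ = ∑ e ∈ A, ∑ w ∈ comp A z, ((if w = Sum.inl e.1 then x e else 0) + (if w = Sum.inr e.2 then x e else 0)) := Finset.sum_comm
        _ = 0 := by
            apply Finset.sum_eq_zero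
            intro e heA
            rw [Finset.sum_add_distrib, Finset.sum_ite_eq' (comp A z) (Sum.inl e.1) (fun _ => x e),
              Finset.sum_ite_eq' (comp A z) (Sum.inr e.2) (fun _ => x e)]
            have hiff : Sum.inl e.1 ∈ comp A z ↔ Sum.inr e.2 ∈ comp A z := by
              have hstep : RZ A (Sum.inl e.1) (Sum.inr e.2) := ⟨e, heA, Or.inl ⟨rfl, rfl⟩⟩
              simp only [mem_comp]
              exact ⟨fun h' => reach_trans h' (Relation.ReflTransGen.single hstep),
                fun h' => reach_trans h' (Relation.ReflTransGen.single hstep.symm)⟩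
            by_cases hmem : Sum.inl e.1 ∈ comp A z
            · rw [if_pos hmem, if_pos (hiff.1 hmem)]
              exact (by decide : ∀ t : ZMod 2, t + t = 0) _
            · rw [if_neg hmem, if_neg (fun h' => hmem (hiff.2 h')), add_zero]
    have hone : (∑ w ∈ comp A z, ∑ e ∈ cutZ A w, x e) = ((comp A z).card : ZMod 2) := by
      rw [Finset.sum_congr rfl (fun w hw => hx1 w (hfree w (mem_comp.1 hw)))]
      simp [Finset.sum_const, nsmul_eq_mul]
    rw [hone] at hdouble
    exact cast2_zero.1 hdouble


/-- Every digraph admits a weak-odd 3-coloring. -/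
lemma exists_three_col (A : Finset (V × V)) : ∃ φ : V × V → ℕ, IsWOColoring A 3 φ := by
  classical
  let st : Setoid (V ⊕ V) :=
    ⟨Reach A, ⟨fun z => reach_refl z, fun h => reach_symm h, fun h h' => reach_trans h h'⟩⟩
  let rep : V ⊕ V → V ⊕ V := fun z => (Quotient.mk st z).out
  have hrep_reach : ∀ z, Reach A z (rep z) := by
    intro z
    have h1 : Quotient.mk st ((Quotient.mk st z).out) = Quotient.mk st z := Quotient.out_eq _
    exact reach_symm (Quotient.exact h1)
  have hrep_eq : ∀ {z w}, Reach A z w → rep z = rep w := by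
    intro z w h
    show (Quotient.mk st z).out = (Quotient.mk st w).out
    congr 1
    exact Quotient.sound h
  let Bad : (V ⊕ V) → Prop := fun z => (∀ w, Reach A z w → Tpred A w) ∧ Odd (comp A z).card
  have hbad_inv : ∀ {z w}, Bad z → Reach A z w → Bad w := by
    rintro z w ⟨h1, h2⟩ hr
    refine ⟨fun u hu => h1 u (reach_trans hr hu), ?_⟩
    rw [← comp_congr hr]
    exact h2
  let R₀ : Finset (V ⊕ V) := (Finset.univ.filter Bad).image rep
  have hcut : ∀ q : {y // y ∈ R₀}, (cutZ A (q.1)).Nonempty := by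
    rintro ⟨y, hy⟩
    obtain ⟨z, hz, rfl⟩ := Finset.mem_image.1 hy
    have hb : Bad z := (Finset.mem_filter.1 hz).2
    exact (hb.1 _ (hrep_reach z)).1
  let F : Finset (V × V) := R₀.attach.image (fun q => (hcut q).choose)
  have hFin : ∀ e ∈ F, ∃ y ∈ R₀, e ∈ cutZ A y := by
    intro e he
    obtain ⟨q, _, rfl⟩ := Finset.mem_image.1 he
    exact ⟨q.1, q.2, (hcut q).choose_spec⟩
  have hFA : ∀ e ∈ F, e ∈ A := by
    intro e he
    obtain ⟨y, _, hc⟩ := hFin e he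
    exact (mem_cutZ.1 hc).1
  have hR₀rep : ∀ y ∈ R₀, rep y = y := by
    intro y hy
    obtain ⟨z, _, rfl⟩ := Finset.mem_image.1 hy
    exact (hrep_eq (hrep_reach z)).symm
  have hFuniq : ∀ e ∈ F, ∀ e' ∈ F, ∀ u, e ∈ cutZ A u → e' ∈ cutZ A u → e = e' := by
    intro e he e' he' u hu hu'
    obtain ⟨q, _, rfl⟩ := Finset.mem_image.1 he
    obtain ⟨q', _, rfl⟩ := Finset.mem_image.1 he'
    have h1 : Reach A q.1 u := by
      have a1 := (reach_of_mem_cut (hcut q).choose_spec).1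
      have a2 := (reach_of_mem_cut hu).1
      exact reach_trans a1 (reach_symm a2)
    have h2 : Reach A q'.1 u := by
      have a1 := (reach_of_mem_cut (hcut q').choose_spec).1
      have a2 := (reach_of_mem_cut hu').1
      exact reach_trans a1 (reach_symm a2)
    have hqq : q = q' := by
      apply Subtype.ext
      have : Reach A q.1 q'.1 := reach_trans h1 (reach_symm h2)
      calc q.1 = rep q.1 := (hR₀rep q.1 q.2).symm
        _ = rep q'.1 := hrep_eq this
        _ = q'.1 := hR₀rep q'.1 q'.2
    rw [hqq]
  let Exempt : (V ⊕ V) → Prop := fun z => ∃ e ∈ F, e ∈ cutZ A z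
  let S₀ : Finset (V ⊕ V) := Finset.univ.filter (fun z => Tpred A z ∧ ¬ Exempt z)
  have hmemS : ∀ z, z ∈ S₀ ↔ (Tpred A z ∧ ¬ Exempt z) := by intro z; simp [S₀]
  have hgood : ∀ z ∈ S₀, (∃ z', z' ∉ S₀ ∧ Reach A z z') ∨
      Even ((comp A z).filter (· ∈ S₀)).card := by
    intro z hzS
    obtain ⟨hzT, hzE⟩ := (hmemS z).1 hzS
    by_cases hfree : ∃ w, Reach A z w ∧ ¬ Tpred A w
    · obtain ⟨w, hr, hw⟩ := hfree
      exact Or.inl ⟨w, fun hmem => hw ((hmemS w).1 hmem).1, hr⟩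
    · push_neg at hfree
      by_cases hbad : Bad z
      · -- dump at an exempt endpoint of the chosen edge of this component
        left
        have hyR : rep z ∈ R₀ := Finset.mem_image_of_mem rep (Finset.mem_filter.2 ⟨Finset.mem_univ z, hbad⟩)
        set q : {y // y ∈ R₀} := ⟨rep z, hyR⟩ with hq
        set e : V × V := (hcut q).choose with he
        have heF : e ∈ F := Finset.mem_image_of_mem _ (Finset.mem_attach _ q)
        have hecut : e ∈ cutZ A (rep z) := (hcut q).choose_spec
        refine ⟨Sum.inl e.1, ?_, ?_⟩
        · intro hmem
          exact ((hmemS _).1 hmem).2 ⟨e, heF, mem_cutZ.2 ⟨(mem_cutZ.1 hecut).1, Or.inl rfl⟩⟩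
        · exact reach_trans (hrep_reach z) (reach_of_mem_cut hecut).1
      · right
        have heven : Even (comp A z).card := by
          have : ¬ Odd (comp A z).card := fun ho => hbad ⟨fun w hw => hfree w hw, ho⟩
          exact Nat.not_odd_iff_even.1 this
        have hfe : (comp A z).filter (· ∈ S₀) = comp A z := by
          apply Finset.filter_true_of_mem
          intro w hw
          refine (hmemS w).2 ⟨hfree w (mem_comp.1 hw), ?_⟩
          rintro ⟨e, heF, hecut⟩
          obtain ⟨y, hyR, hycut⟩ := hFin e heF
          have hwy : Reach A w y :=
            reach_trans (reach_of_mem_cut hecut).1 (reach_symm (reach_of_mem_cut hycut).1)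
          have hzy : Reach A z y := reach_trans (mem_comp.1 hw) hwy
          obtain ⟨zb, hzb, hyrep⟩ := Finset.mem_image.1 hyR
          have hbzb : Bad zb := (Finset.mem_filter.1 hzb).2
          have hzbz : Reach A zb z := by
            refine reach_trans ?_ (reach_symm hzy)
            rw [← hyrep] at *
            exact hrep_reach zb
          exact hbad (hbad_inv hbzb hzbz)
        rw [hfe]
        exact heven
  obtain ⟨x, hxsupp, hxsum⟩ := solve A S₀ S₀ Finset.Subset.rfl hgood
  set φ : V × V → ℕ := fun e => if e ∈ F then 2 else if x e = 1 then 1 else 0 with hφ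
  refine ⟨φ, isWO_iff.2 ⟨?_, ?_⟩⟩
  · intro e _
    simp only [hφ]
    split
    · omega
    · split <;> omega
  · intro z hne
    by_cases heven : Even (cutZ A z).card
    · have hzT : Tpred A z := ⟨hne, heven⟩
      by_cases hex : Exempt z
      · refine ⟨2, ?_⟩
        obtain ⟨e₀, he₀F, he₀cut⟩ := hex
        have hfe : (cutZ A z).filter (fun e => φ e = 2) = {e₀} := by
          ext e
          simp only [Finset.mem_filter, Finset.mem_singleton]
          constructor
          · rintro ⟨hecut, hephi⟩
            have heF : e ∈ F := by
              by_contra heF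
              simp only [hφ, if_neg heF] at hephi
              split at hephi <;> omega
            exact hFuniq e heF e₀ he₀F z hecut he₀cut
          · rintro rfl
            exact ⟨he₀cut, by simp [hφ, he₀F]⟩
        rw [hfe]
        simp
      · refine ⟨1, ?_⟩
        have hzS : z ∈ S₀ := (hmemS z).2 ⟨hzT, hex⟩
        have h1 : (∑ e ∈ cutZ A z, x e) = 1 := by
          rw [hxsum z hzS, if_pos hzS]
        rw [sum_cut_eq_card] at h1
        have hnotF : ∀ e ∈ cutZ A z, e ∉ F := by
          intro e he heF
          exact hex ⟨e, heF, he⟩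
        have : (cutZ A z).filter (fun e => φ e = 1) = (cutZ A z).filter (fun e => x e = 1) := by
          apply Finset.filter_congr
          intro e he
          simp only [hφ, if_neg (hnotF e he)]
          constructor
          · intro h'; by_contra hx1; simp [hx1] at h'
          · intro h'; simp [h']
        rw [this]
        exact cast2_one.1 h1
    · have hbound : ∀ e ∈ cutZ A z, φ e < 3 := by
        intro e _
        simp only [hφ]
        split
        · omega
        · split <;> omega
      have hcard := three_class hbound
      by_contra hno
      push_neg at hno
      have h0 := Nat.not_odd_iff_even.1 (hno 0)
      have h1 := Nat.not_odd_iff_even.1 (hno 1)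
      have h2 := Nat.not_odd_iff_even.1 (hno 2)
      exact heven (by rw [hcard]; exact Even.add (Even.add h0 h1) h2)


/-! ### Characterization of the weak-odd index -/

lemma has_mono {A : Finset (V × V)} {k m : ℕ} (hkm : k ≤ m)
    (h : ∃ φ : V × V → ℕ, IsWOColoring A k φ) : ∃ φ : V × V → ℕ, IsWOColoring A m φ := by
  obtain ⟨φ, hb, hs⟩ := h
  exact ⟨φ, fun e he => lt_of_lt_of_le (hb e he) hkm, hs⟩

lemma has_zero_iff {A : Finset (V × V)} :
    (∃ φ : V × V → ℕ, IsWOColoring A 0 φ) ↔ A = ∅ := by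
  constructor
  · rintro ⟨φ, hb, _⟩
    rw [Finset.eq_empty_iff_forall_notMem]
    intro e he
    exact absurd (hb e he) (by omega)
  · rintro rfl
    refine ⟨fun _ => 0, fun e he => absurd he (Finset.notMem_empty e), fun v => ?_⟩
    constructor <;>
    · intro hne
      exfalso
      obtain ⟨e, he⟩ := hne
      simp [outCut, inCut] at he
lemma has_one_iff {A : Finset (V × V)} :
    (∃ φ : V × V → ℕ, IsWOColoring A 1 φ) ↔ Pcond A := by
  constructor
  · rintro ⟨φ, hφ⟩
    rw [isWO_iff] at hφ
    obtain ⟨hb, hc⟩ := hφ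
    intro z hne
    obtain ⟨i, hi⟩ := hc z hne
    rcases Nat.eq_zero_or_pos i with rfl | hpos
    · have : (cutZ A z).filter (fun e => φ e = 0) = cutZ A z := by
        apply Finset.filter_true_of_mem
        intro e he
        have := hb e (mem_cutZ.1 he).1
        omega
      rwa [this] at hi
    · have : (cutZ A z).filter (fun e => φ e = i) = ∅ := by
        apply Finset.filter_false_of_mem
        intro e he
        have := hb e (mem_cutZ.1 he).1
        omega
      rw [this] at hi
      simp at hi
  · intro hp
    refine ⟨fun _ => 0, isWO_iff.2 ⟨fun e he => by omega, fun z hne => ⟨0, ?_⟩⟩⟩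
    have : (cutZ A z).filter (fun _ => (0 : ℕ) = 0) = cutZ A z := by simp
    simpa [this] using hp z hne

lemma pcond_of_empty {A : Finset (V × V)} (h : A = ∅) : Pcond A := by
  subst h
  intro z hne
  exfalso
  obtain ⟨e, he⟩ := hne
  rw [mem_cutZ] at he
  simp at he

lemma crit_of_pcond {A : Finset (V × V)} (h : Pcond A) : Crit A := by
  intro z hz
  exact absurd hz.2 (Nat.not_even_iff_odd.2 (h z hz.1))

noncomputable def formula (A : Finset (V × V)) : ℕ :=
  if A = ∅ then 0 else if Pcond A then 1 else if Crit A then 2 else 3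

lemma woIndex_eq_formula (A : Finset (V × V)) : woIndex A = formula A := by
  classical
  unfold woIndex formula
  have hset : ∀ k, k ∈ {k | ∃ φ : V × V → ℕ, IsWOColoring A k φ} ↔
      (∃ φ : V × V → ℕ, IsWOColoring A k φ) := fun k => Iff.rfl
  by_cases h0 : A = ∅
  · rw [if_pos h0]
    exact Nat.sInf_eq_zero.2 (Or.inl (has_zero_iff.2 h0))
  · rw [if_neg h0]
    by_cases h1 : Pcond A
    · rw [if_pos h1]
      apply le_antisymm
      · exact Nat.sInf_le (has_one_iff.2 h1)
      · rcases Nat.eq_zero_or_pos (sInf {k | ∃ φ : V × V → ℕ, IsWOColoring A k φ}) with he | hp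
        · exact absurd (has_zero_iff.1 (Nat.sInf_eq_zero.1 he |>.resolve_right
            (fun hemp => by
              rw [Set.eq_empty_iff_forall_notMem] at hemp
              exact hemp 1 (has_one_iff.2 h1)))) h0
        · exact hp
    · rw [if_neg h1]
      have hmem : sInf {k | ∃ φ : V × V → ℕ, IsWOColoring A k φ}
          ∈ {k | ∃ φ : V × V → ℕ, IsWOColoring A k φ} :=
        Nat.sInf_mem ⟨3, exists_three_col A⟩
      by_cases h2 : Crit A
      · rw [if_pos h2]
        apply le_antisymm
        · exact Nat.sInf_le (exists_two_col h2)
        · by_contra hlt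
          push_neg at hlt
          interval_cases h : (sInf {k | ∃ φ : V × V → ℕ, IsWOColoring A k φ})
          · exact h0 (has_zero_iff.1 hmem)
          · exact h1 (has_one_iff.1 hmem)
      · rw [if_neg h2]
        apply le_antisymm
        · exact Nat.sInf_le (exists_three_col A)
        · by_contra hlt
          push_neg at hlt
          interval_cases h : (sInf {k | ∃ φ : V × V → ℕ, IsWOColoring A k φ})
          · exact h0 (has_zero_iff.1 hmem)
          · exact h1 (has_one_iff.1 hmem)
          · exact h2 (crit_of_two_col hmem)


/-! ### Blow-up transfer -/

section Blowup

variable {W : Type*} [Fintype W] [DecidableEq W]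
variable (A : Finset (W × W)) (s : W → ℕ) (hodd : ∀ w : W, Odd (s w))

local notation "Vb" => (Σ w : W, Fin (s w))

lemma mem_blowup {e : Vb × Vb} : e ∈ blowup A s ↔ (e.1.1, e.2.1) ∈ A := by
  simp [blowup]

/-- projection of split vertices -/
def pz : (Vb ⊕ Vb) → (W ⊕ W) := Sum.map Sigma.fst Sigma.fst

lemma outCut_blow_eq (a : Vb) :
    outCut (blowup A s) a =
      (Finset.univ.filter (fun y : Vb => (a.1, y.1) ∈ A)).image (fun y => (a, y)) := by
  ext e
  simp only [outCut, Finset.mem_filter, mem_blowup, Finset.mem_image, Finset.mem_univ,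
    true_and]
  constructor
  · rintro ⟨hA, h1⟩
    subst h1
    exact ⟨e.2, hA, rfl⟩
  · rintro ⟨y, hy, rfl⟩
    exact ⟨hy, rfl⟩

lemma inCut_blow_eq (a : Vb) :
    inCut (blowup A s) a =
      (Finset.univ.filter (fun y : Vb => (y.1, a.1) ∈ A)).image (fun y => (y, a)) := by
  ext e
  simp only [inCut, Finset.mem_filter, mem_blowup, Finset.mem_image, Finset.mem_univ,
    true_and]
  constructor
  · rintro ⟨hA, h1⟩
    subst h1
    exact ⟨e.1, hA, rfl⟩
  · rintro ⟨y, hy, rfl⟩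
    exact ⟨hy, rfl⟩

lemma outCut_base_eq (u : W) :
    outCut A u = (Finset.univ.filter (fun v => (u, v) ∈ A)).image (fun v => (u, v)) := by
  ext e
  simp only [outCut, Finset.mem_filter, Finset.mem_image, Finset.mem_univ, true_and]
  constructor
  · rintro ⟨hA, h1⟩
    subst h1
    exact ⟨e.2, hA, rfl⟩
  · rintro ⟨y, hy, rfl⟩
    exact ⟨hy, rfl⟩

lemma inCut_base_eq (u : W) :
    inCut A u = (Finset.univ.filter (fun v => (v, u) ∈ A)).image (fun v => (v, u)) := by
  ext e
  simp only [inCut, Finset.mem_filter, Finset.mem_image, Finset.mem_univ, true_and]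
  constructor
  · rintro ⟨hA, h1⟩
    subst h1
    exact ⟨e.1, hA, rfl⟩
  · rintro ⟨y, hy, rfl⟩
    exact ⟨hy, rfl⟩

lemma card_filter_sigma (p : W → Prop) [DecidablePred p] :
    (Finset.univ.filter (fun y : Vb => p y.1)).card
      = ∑ v ∈ Finset.univ.filter p, s v := by
  classical
  have h1 : (Finset.univ.filter (fun y : Vb => p y.1))
      = (Finset.univ.filter p).sigma (fun v => (Finset.univ : Finset (Fin (s v)))) := by
    ext y
    simp [Finset.mem_sigma]
  rw [h1, Finset.card_sigma]
  simp

lemma card_cut_out (a : Vb) :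
    (outCut (blowup A s) a).card = ∑ v ∈ Finset.univ.filter (fun v => (a.1, v) ∈ A), s v := by
  rw [outCut_blow_eq, Finset.card_image_of_injective _ (fun y y' h => by
    injection h with h1 h2), card_filter_sigma s (fun v => (a.1, v) ∈ A)]

lemma card_cut_in (a : Vb) :
    (inCut (blowup A s) a).card = ∑ v ∈ Finset.univ.filter (fun v => (v, a.1) ∈ A), s v := by
  rw [inCut_blow_eq, Finset.card_image_of_injective _ (fun y y' h => by
    injection h with h1 h2), card_filter_sigma s (fun v => (v, a.1) ∈ A)]

lemma card_base_out (u : W) :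
    (outCut A u).card = (Finset.univ.filter (fun v => (u, v) ∈ A)).card := by
  rw [outCut_base_eq, Finset.card_image_of_injective _ (fun y y' h => by
    injection h with h1 h2)]

lemma card_base_in (u : W) :
    (inCut A u).card = (Finset.univ.filter (fun v => (v, u) ∈ A)).card := by
  rw [inCut_base_eq, Finset.card_image_of_injective _ (fun y y' h => by
    injection h with h1 h2)]

include hodd in
lemma cut_parity (z : Vb ⊕ Vb) :
    (((cutZ (blowup A s) z).card : ZMod 2)) = ((cutZ A (pz s z)).card : ZMod 2) := by
  cases z with
  | inl a =>
    show (((outCut (blowup A s) a).card : ZMod 2)) = ((outCut A a.1).card : ZMod 2)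
    rw [card_cut_out, card_base_out, Nat.cast_sum]
    rw [Finset.sum_congr rfl (fun v _ => cast2_one.2 (hodd v))]
    simp
  | inr a =>
    show (((inCut (blowup A s) a).card : ZMod 2)) = ((inCut A a.1).card : ZMod 2)
    rw [card_cut_in, card_base_in, Nat.cast_sum]
    rw [Finset.sum_congr rfl (fun v _ => cast2_one.2 (hodd v))]
    simp

include hodd in
lemma sum_s_pos_iff (D : Finset W) : 0 < (∑ v ∈ D, s v) ↔ 0 < D.card := by
  rw [Finset.card_pos]
  constructor
  · intro h
    rcases D.eq_empty_or_nonempty with rfl | hne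
    · simp at h
    · exact hne
  · rintro ⟨v, hv⟩
    calc 0 < s v := (hodd v).pos
    _ ≤ ∑ v ∈ D, s v := Finset.single_le_sum (fun i _ => Nat.zero_le _) hv

include hodd in
lemma cut_nonempty_iff (z : Vb ⊕ Vb) :
    (cutZ (blowup A s) z).Nonempty ↔ (cutZ A (pz s z)).Nonempty := by
  rw [← Finset.card_pos, ← Finset.card_pos]
  cases z with
  | inl a =>
    show 0 < (outCut (blowup A s) a).card ↔ 0 < (outCut A a.1).card
    rw [card_cut_out, card_base_out, sum_s_pos_iff s hodd]
  | inr a =>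
    show 0 < (inCut (blowup A s) a).card ↔ 0 < (inCut A a.1).card
    rw [card_cut_in, card_base_in, sum_s_pos_iff s hodd]


lemma rz_proj {z z' : Vb ⊕ Vb} (h : RZ (blowup A s) z z') : RZ A (pz s z) (pz s z') := by
  obtain ⟨e, he, hc | hc⟩ := h
  · exact ⟨(e.1.1, e.2.1), (mem_blowup A s).1 he, Or.inl (by rw [hc.1, hc.2]; exact ⟨rfl, rfl⟩)⟩
  · exact ⟨(e.1.1, e.2.1), (mem_blowup A s).1 he, Or.inr (by rw [hc.1, hc.2]; exact ⟨rfl, rfl⟩)⟩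

lemma reach_proj {z z' : Vb ⊕ Vb} (h : Reach (blowup A s) z z') :
    Reach A (pz s z) (pz s z') :=
  Relation.ReflTransGen.lift (pz s) (fun _ _ hr => rz_proj A s hr) _ _ h

include hodd in
lemma rz_lift {y y' : W ⊕ W} (h : RZ A y y') :
    ∀ z : Vb ⊕ Vb, pz s z = y → ∃ z', pz s z' = y' ∧ RZ (blowup A s) z z' := by
  intro z hz
  obtain ⟨e, he, ⟨h1, h2⟩ | ⟨h1, h2⟩⟩ := h
  · subst h1; subst h2
    cases z with
    | inr a => simp [pz] at hz
    | inl a =>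
      simp only [pz, Sum.map_inl, Sum.inl.injEq] at hz
      refine ⟨Sum.inr ⟨e.2, ⟨0, (hodd e.2).pos⟩⟩, rfl, ⟨(a, ⟨e.2, ⟨0, (hodd e.2).pos⟩⟩), ?_, Or.inl ⟨rfl, rfl⟩⟩⟩
      rw [mem_blowup]
      show (a.1, e.2) ∈ A
      rw [hz]
      exact he
  · subst h1; subst h2
    cases z with
    | inl a => simp [pz] at hz
    | inr a =>
      simp only [pz, Sum.map_inr, Sum.inr.injEq] at hz
      refine ⟨Sum.inl ⟨e.1, ⟨0, (hodd e.1).pos⟩⟩, rfl, ⟨(⟨e.1, ⟨0, (hodd e.1).pos⟩⟩, a), ?_, Or.inr ⟨rfl, rfl⟩⟩⟩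
      rw [mem_blowup]
      show (e.1, a.1) ∈ A
      rw [hz]
      exact he

include hodd in
lemma reach_lift {y' : W ⊕ W} {z : Vb ⊕ Vb} (h : Reach A (pz s z) y') :
    ∃ z', pz s z' = y' ∧ Reach (blowup A s) z z' := by
  induction h with
  | refl => exact ⟨z, rfl, reach_refl z⟩
  | tail hstep hr ih =>
    rename_i b c _
    obtain ⟨z', hz', hrz'⟩ := ih
    obtain ⟨z'', hz'', hrz''⟩ := rz_lift A s hodd hr z' hz'
    exact ⟨z'', hz'', reach_trans hrz' (Relation.ReflTransGen.single hrz'')⟩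

lemma copies_reach {z w : Vb ⊕ Vb} (hp : pz s z = pz s w)
    (hne : (cutZ (blowup A s) z).Nonempty) : Reach (blowup A s) z w := by
  obtain ⟨e, he⟩ := hne
  cases z with
  | inl a =>
    cases w with
    | inr b => simp [pz] at hp
    | inl b =>
      simp only [pz, Sum.map_inl, Sum.inl.injEq] at hp
      have heb : e ∈ blowup A s := (Finset.mem_filter.1 he).1
      have he1 : e.1 = a := (Finset.mem_filter.1 he).2
      have hbase : (a.1, e.2.1) ∈ A := by
        have := (mem_blowup A s).1 heb
        rwa [he1] at this
      have s1 : RZ (blowup A s) (Sum.inl a) (Sum.inr e.2) :=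
        ⟨(a, e.2), (mem_blowup A s).2 hbase, Or.inl ⟨rfl, rfl⟩⟩
      have s2 : RZ (blowup A s) (Sum.inl b) (Sum.inr e.2) :=
        ⟨(b, e.2), (mem_blowup A s).2 (by rw [← hp]; exact hbase), Or.inl ⟨rfl, rfl⟩⟩
      exact reach_trans (Relation.ReflTransGen.single s1)
        (Relation.ReflTransGen.single s2.symm)
  | inr a =>
    cases w with
    | inl b => simp [pz] at hp
    | inr b =>
      simp only [pz, Sum.map_inr, Sum.inr.injEq] at hp
      have heb : e ∈ blowup A s := (Finset.mem_filter.1 he).1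
      have he2 : e.2 = a := (Finset.mem_filter.1 he).2
      have hbase : (e.1.1, a.1) ∈ A := by
        have := (mem_blowup A s).1 heb
        rwa [he2] at this
      have s1 : RZ (blowup A s) (Sum.inr a) (Sum.inl e.1) :=
        ⟨(e.1, a), (mem_blowup A s).2 hbase, Or.inr ⟨rfl, rfl⟩⟩
      have s2 : RZ (blowup A s) (Sum.inr b) (Sum.inl e.1) :=
        ⟨(e.1, b), (mem_blowup A s).2 (by rw [← hp]; exact hbase), Or.inr ⟨rfl, rfl⟩⟩
      exact reach_trans (Relation.ReflTransGen.single s1)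
        (Relation.ReflTransGen.single s2.symm)


include hodd in
lemma comp_blow_eq {z : Vb ⊕ Vb} (hne : (cutZ (blowup A s) z).Nonempty) :
    comp (blowup A s) z = Finset.univ.filter (fun w => pz s w ∈ comp A (pz s z)) := by
  ext w
  simp only [mem_comp, Finset.mem_filter, Finset.mem_univ, true_and]
  constructor
  · intro h
    exact reach_proj A s h
  · intro h
    obtain ⟨z', hz', hrz'⟩ := reach_lift A s hodd (mem_comp.1 (mem_comp.2 h))
    have hz'ne : (cutZ (blowup A s) z').Nonempty := cut_nonempty_of_reach hrz' hne
    exact reach_trans hrz' (copies_reach A s (hz'.trans rfl ▸ hz' ▸ rfl) hz'ne)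


lemma card_fiber (y : W ⊕ W) :
    (Finset.univ.filter (fun w : Vb ⊕ Vb => pz s w = y)).card = Sum.elim s s y := by
  cases y with
  | inl u =>
    have h1 : (Finset.univ.filter (fun w : Vb ⊕ Vb => pz s w = Sum.inl u))
        = (Finset.univ : Finset (Fin (s u))).image (fun i => Sum.inl (⟨u, i⟩ : Vb)) := by
      ext w
      simp only [Finset.mem_filter, Finset.mem_univ, true_and, Finset.mem_image]
      constructor
      · intro hw
        cases w with
        | inr a => simp [pz] at hw
        | inl a =>
          simp only [pz, Sum.map_inl, Sum.inl.injEq] at hw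
          subst hw
          exact ⟨a.2, rfl⟩
      · rintro ⟨i, rfl⟩
        rfl
    rw [h1, Finset.card_image_of_injective _ (fun i j h => by
      simpa using (Sum.inl_injective h))]
    simp
  | inr u =>
    have h1 : (Finset.univ.filter (fun w : Vb ⊕ Vb => pz s w = Sum.inr u))
        = (Finset.univ : Finset (Fin (s u))).image (fun i => Sum.inr (⟨u, i⟩ : Vb)) := by
      ext w
      simp only [Finset.mem_filter, Finset.mem_univ, true_and, Finset.mem_image]
      constructor
      · intro hw
        cases w with
        | inl a => simp [pz] at hw
        | inr a =>
          simp only [pz, Sum.map_inr, Sum.inr.injEq] at hw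
          subst hw
          exact ⟨a.2, rfl⟩
      · rintro ⟨i, rfl⟩
        rfl
    rw [h1, Finset.card_image_of_injective _ (fun i j h => by
      simpa using (Sum.inr_injective h))]
    simp

include hodd in
lemma comp_parity {z : Vb ⊕ Vb} (hne : (cutZ (blowup A s) z).Nonempty) :
    (((comp (blowup A s) z).card : ZMod 2)) = ((comp A (pz s z)).card : ZMod 2) := by
  rw [comp_blow_eq A s hodd hne]
  rw [Finset.card_eq_sum_card_fiberwise (f := pz s) (t := comp A (pz s z))
    (s := Finset.univ.filter (fun w => pz s w ∈ comp A (pz s z)))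
    (fun w hw => (Finset.mem_filter.1 (Finset.mem_coe.1 hw)).2)]
  have hfib : ∀ y ∈ comp A (pz s z),
      ((Finset.univ.filter (fun w => pz s w ∈ comp A (pz s z))).filter (fun w => pz s w = y))
        = Finset.univ.filter (fun w : Vb ⊕ Vb => pz s w = y) := by
    intro y hy
    ext w
    simp only [Finset.mem_filter, Finset.mem_univ, true_and]
    constructor
    · tauto
    · intro h
      exact ⟨h ▸ hy, h⟩
  rw [Finset.sum_congr rfl (fun y hy => by rw [hfib y hy, card_fiber])]
  rw [Nat.cast_sum]
  have : ∀ y ∈ comp A (pz s z), ((Sum.elim s s y : ℕ) : ZMod 2) = 1 := by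
    intro y _
    cases y with
    | inl u => exact cast2_one.2 (hodd u)
    | inr u => exact cast2_one.2 (hodd u)
  rw [Finset.sum_congr rfl this]
  simp

include hodd in
lemma tpred_iff (z : Vb ⊕ Vb) : Tpred (blowup A s) z ↔ Tpred A (pz s z) := by
  unfold Tpred
  rw [cut_nonempty_iff A s hodd]
  constructor
  · rintro ⟨h1, h2⟩
    refine ⟨h1, cast2_zero.1 ?_⟩
    rw [← cut_parity A s hodd]
    exact cast2_zero.2 h2
  · rintro ⟨h1, h2⟩
    refine ⟨h1, cast2_zero.1 ?_⟩
    rw [cut_parity A s hodd]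
    exact cast2_zero.2 h2

/-- canonical copy -/
def c0 (hodd : ∀ w : W, Odd (s w)) : (W ⊕ W) → (Vb ⊕ Vb) :=
  Sum.map (fun w => ⟨w, ⟨0, (hodd w).pos⟩⟩) (fun w => ⟨w, ⟨0, (hodd w).pos⟩⟩)

lemma pz_c0 (y : W ⊕ W) : pz s (c0 s hodd y) = y := by
  cases y <;> rfl

include hodd in
lemma pcond_iff : Pcond (blowup A s) ↔ Pcond A := by
  constructor
  · intro h y hne
    have h2 := h (c0 s hodd y)
    rw [cut_nonempty_iff A s hodd, pz_c0] at h2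
    have h3 := h2 hne
    apply cast2_one.1
    rw [← pz_c0 s hodd y, ← cut_parity A s hodd]
    exact cast2_one.2 h3
  · intro h z hne
    have h3 := h (pz s z) ((cut_nonempty_iff A s hodd z).1 hne)
    apply cast2_one.1
    rw [cut_parity A s hodd]
    exact cast2_one.2 h3

include hodd in
lemma crit_iff : Crit (blowup A s) ↔ Crit A := by
  constructor
  · intro h y hy
    set z := c0 s hodd y with hz
    have hpz : pz s z = y := pz_c0 s hodd y
    have hzT : Tpred (blowup A s) z := by rw [tpred_iff A s hodd, hpz]; exact hy
    rcases h z hzT with ⟨z', hr, hnT⟩ | heven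
    · left
      refine ⟨pz s z', ?_, ?_⟩
      · rw [← hpz]
        exact reach_proj A s hr
      · rw [← tpred_iff A s hodd]
        exact hnT
    · right
      apply cast2_zero.1
      rw [← hpz, ← comp_parity A s hodd hzT.1]
      exact cast2_zero.2 heven
  · intro h z hz
    have hyT : Tpred A (pz s z) := (tpred_iff A s hodd z).1 hz
    rcases h (pz s z) hyT with ⟨y', hr, hnT⟩ | heven
    · left
      obtain ⟨z', hz', hrz'⟩ := reach_lift A s hodd hr
      refine ⟨z', hrz', ?_⟩
      rw [tpred_iff A s hodd, hz']
      exact hnT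
    · right
      apply cast2_zero.1
      rw [comp_parity A s hodd hz.1]
      exact cast2_zero.2 heven

include hodd in
lemma blowup_empty_iff : blowup A s = ∅ ↔ A = ∅ := by
  constructor
  · intro h
    rw [Finset.eq_empty_iff_forall_notMem] at h ⊢
    intro e he
    exact h ((⟨e.1, ⟨0, (hodd e.1).pos⟩⟩, ⟨e.2, ⟨0, (hodd e.2).pos⟩⟩) : Vb × Vb)
      ((mem_blowup A s).2 he)
  · intro h
    rw [Finset.eq_empty_iff_forall_notMem]
    intro e he
    rw [mem_blowup, h] at he
    exact absurd he (Finset.notMem_empty _)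

end Blowup

end WOAux

/-- Blowing up each vertex of a digraph into an independent set of odd size does not
change the weak-odd chromatic index. -/
theorem blowup_odd_index {W : Type*} [Fintype W] [DecidableEq W]
    (A : Finset (W × W)) (hloop : ∀ w : W, (w, w) ∉ A)
    (s : W → ℕ) (hodd : ∀ w : W, Odd (s w)) :
    woIndex (blowup A s) = woIndex A := by
  classical
  rw [WOAux.woIndex_eq_formula, WOAux.woIndex_eq_formula]
  unfold WOAux.formula
  rw [if_congr (WOAux.blowup_empty_iff A s hodd) rfl
      (if_congr (WOAux.pcond_iff A s hodd) rfl
        (if_congr (WOAux.crit_iff A s hodd) rfl rfl))]
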